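/- Let R be a commutative ℚ-algebra, let a ≥ 1 and b ≥ 1 be integers, let u_0, …, u_a ∈ R and U(Y) = Σ_{j=0}^{a} u_j Y^j ∈ R[Y]. Let I(Y,Z) = Σ_{k≥0} I_k(Y)Z^k ∈ (R[Y])[[Z]] be the formal inverse of Y + Z·U(Y)^b, i.e. the unique power series with Σ_{k≥0} I_k(Y + Z·U(Y)^b)·Z^k = Y. For k ≥ 0 define v_k(Y) ∈ R[Y] to be the coefficient of Z^k in U(I(Y,Z)) = Σ_{j=0}^{a} u_j·I(Y,Z)^j. Then v_0(Y) = U(Y) and, for every m ≥ 1, v_m(Y) = −Σ_{j=1}^{m} (U(Y)^{bj}/j!) · v_{m−j}^{(j)}(Y), where ^{(j)} denotes the j-th derivative with respect to Y (equivalently, Σ_{j=0}^{m} (U(Y)^{bj}/j!) · v_{m−j}^{(j)}(Y) = 0 for m ≥ 1). -/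

import Mathlib

noncomputable section

namespace CoeffSubstAux

open Polynomial PowerSeries Finset

variable {S : Type*} [CommRing S] (ψ : S →+* PowerSeries S)

lemma coeff_eval₂ (Q : Polynomial S) (p : ℕ) :
    PowerSeries.coeff (R := S) p (Polynomial.eval₂ ψ PowerSeries.X Q)
      = ∑ k ∈ Finset.range (p + 1), PowerSeries.coeff (R := S) (p - k) (ψ (Q.coeff k)) := by
  have hdeg : Q.natDegree < max (Q.natDegree + 1) (p + 1) :=
    lt_of_lt_of_le (Nat.lt_succ_self _) (le_max_left _ _)
  rw [Polynomial.eval₂_eq_sum_range' ψ hdeg, map_sum]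
  have : ∀ i, PowerSeries.coeff (R := S) p (ψ (Q.coeff i) * PowerSeries.X ^ i)
      = if i ≤ p then PowerSeries.coeff (R := S) (p - i) (ψ (Q.coeff i)) else 0 := fun i =>
    PowerSeries.coeff_mul_X_pow' _ _ _
  simp_rw [this]
  rw [Finset.sum_ite, Finset.sum_const_zero, add_zero]
  apply Finset.sum_congr
  · ext i
    simp only [Finset.mem_filter, Finset.mem_range]
    omega
  · intros; rfl

lemma coeff_eval₂_congr {Q₁ Q₂ : Polynomial S} {p : ℕ}
    (h : ∀ k ≤ p, Q₁.coeff k = Q₂.coeff k) :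
    PowerSeries.coeff (R := S) p (Polynomial.eval₂ ψ PowerSeries.X Q₁)
      = PowerSeries.coeff (R := S) p (Polynomial.eval₂ ψ PowerSeries.X Q₂) := by
  rw [coeff_eval₂, coeff_eval₂]
  exact Finset.sum_congr rfl fun k hk => by
    rw [h k (by simpa [Nat.lt_succ_iff] using hk)]

/-- The coefficient-substitution map. -/
def T (F : PowerSeries S) (m : ℕ) : S :=
  ∑ k ∈ Finset.range (m + 1), PowerSeries.coeff (R := S) (m - k) (ψ (PowerSeries.coeff (R := S) k F))

lemma coeff_eval₂_trunc (F : PowerSeries S) {p n : ℕ} (hpn : p < n) :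
    PowerSeries.coeff (R := S) p (Polynomial.eval₂ ψ PowerSeries.X (trunc n F)) = T ψ F p := by
  rw [coeff_eval₂, T]
  refine Finset.sum_congr rfl fun k hk => ?_
  rw [PowerSeries.coeff_trunc, if_pos (by simp at hk; omega)]

/-- The ring homomorphism substituting `ψ` on coefficients. -/
def Phi : PowerSeries S →+* PowerSeries S where
  toFun F := PowerSeries.mk (T ψ F)
  map_one' := by
    ext p
    rw [PowerSeries.coeff_mk, ← coeff_eval₂_trunc ψ 1 (Nat.lt_succ_self p),
      PowerSeries.trunc_one, Polynomial.eval₂_one]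
  map_mul' F G := by
    ext m
    rw [PowerSeries.coeff_mk, ← coeff_eval₂_trunc ψ (F * G) (Nat.lt_succ_self m),
      ← PowerSeries.trunc_trunc_mul_trunc]
    have h1 : PowerSeries.coeff (R := S) m (Polynomial.eval₂ ψ PowerSeries.X
        (trunc (m+1) ((trunc (m+1) F : PowerSeries S) * trunc (m+1) G)))
        = PowerSeries.coeff (R := S) m (Polynomial.eval₂ ψ PowerSeries.X
          (trunc (m+1) F * trunc (m+1) G)) := by
      apply coeff_eval₂_congr
      intro k hk
      rw [PowerSeries.coeff_trunc, if_pos (by omega), ← Polynomial.coe_mul, Polynomial.coeff_coe]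
    rw [h1, Polynomial.eval₂_mul, PowerSeries.coeff_mul, PowerSeries.coeff_mul]
    refine Finset.sum_congr rfl fun x hx => ?_
    rw [Finset.HasAntidiagonal.mem_antidiagonal] at hx
    rw [coeff_eval₂_trunc ψ F (by omega), coeff_eval₂_trunc ψ G (by omega),
      PowerSeries.coeff_mk, PowerSeries.coeff_mk]
  map_zero' := by
    ext m
    simp [T]
  map_add' F G := by
    ext m
    simp [T, Finset.sum_add_distrib]

lemma coeff_Phi (F : PowerSeries S) (m : ℕ) :
    PowerSeries.coeff (R := S) m (Phi ψ F)
      = ∑ k ∈ Finset.range (m + 1), PowerSeries.coeff (R := S) (m - k) (ψ (PowerSeries.coeff (R := S) k F)) := by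
  simp only [Phi, RingHom.coe_mk, MonoidHom.coe_mk, OneHom.coe_mk, PowerSeries.coeff_mk, T]

lemma Phi_C (s : S) : Phi ψ (PowerSeries.C (R := S) s) = ψ s := by
  ext m
  rw [coeff_Phi]
  rw [Finset.sum_eq_single 0]
  · simp
  · intro k hk hk0
    simp [PowerSeries.coeff_C, hk0]
  · simp

end CoeffSubstAux

namespace CoeffSubstAux

lemma coeff_pow_CX_add {S : Type*} [CommRing S] (c : Polynomial S) (i n : ℕ) :
    ((Polynomial.C (Polynomial.X : Polynomial S) + Polynomial.X * Polynomial.C c) ^ i).coeff n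
      = (i.choose n : Polynomial S) * Polynomial.X ^ (i - n) * c ^ n := by
  rw [add_pow, Polynomial.finset_sum_coeff]
  have hterm : ∀ k, ((Polynomial.C (Polynomial.X : Polynomial S)) ^ k *
        (Polynomial.X * Polynomial.C c) ^ (i - k) *
        ((i.choose k : ℕ) : Polynomial (Polynomial S))).coeff n
      = ((i.choose k : Polynomial S) * Polynomial.X ^ k * c ^ (i - k)) *
          (if n = i - k then 1 else 0) := by
    intro k
    have : (Polynomial.C (Polynomial.X : Polynomial S)) ^ k *
        (Polynomial.X * Polynomial.C c) ^ (i - k) *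
        ((i.choose k : ℕ) : Polynomial (Polynomial S))
        = Polynomial.C ((i.choose k : Polynomial S) * Polynomial.X ^ k * c ^ (i - k)) *
            Polynomial.X ^ (i - k) := by
      rw [mul_pow, ← map_pow, ← map_pow, ← Polynomial.C_eq_natCast, map_mul, map_mul]
      ring
    rw [this, Polynomial.coeff_C_mul, Polynomial.coeff_X_pow, mul_ite, mul_one, mul_zero]
  simp_rw [hterm]
  by_cases hn : n ≤ i
  · rw [Finset.sum_eq_single (i - n)]
    · rw [if_pos (by omega), mul_one, Nat.sub_sub_self hn, Nat.choose_symm hn]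
    · intro k hk hkne
      rw [Finset.mem_range] at hk
      rw [if_neg (by omega), mul_zero]
    · intro h
      exact absurd (Finset.mem_range.2 (by omega)) h
  · rw [Finset.sum_eq_zero, Nat.choose_eq_zero_of_lt (by omega), Nat.cast_zero, zero_mul,
      zero_mul]
    intro k hk
    rw [Finset.mem_range] at hk
    rw [if_neg (by omega), mul_zero]

lemma coeff_eval₂_taylor {S : Type*} [CommRing S] (c : Polynomial S) (p : Polynomial S) (n : ℕ) :
    (Polynomial.eval₂ (Polynomial.C.comp Polynomial.C)
        (Polynomial.C Polynomial.X + Polynomial.X * Polynomial.C c) p).coeff n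
      = Polynomial.hasseDeriv n p * c ^ n := by
  induction p using Polynomial.induction_on' with
  | add p q hp hq =>
      rw [Polynomial.eval₂_add, Polynomial.coeff_add, hp, hq, map_add, add_mul]
  | monomial i r =>
      rw [Polynomial.eval₂_monomial, Polynomial.hasseDeriv_monomial, RingHom.comp_apply,
        Polynomial.coeff_C_mul, coeff_pow_CX_add, ← Polynomial.C_mul_X_pow_eq_monomial,
        map_mul, Polynomial.C_eq_natCast]
      ring

lemma C_inv_factorial_mul_iter_deriv {R : Type*} [CommRing R] [Algebra ℚ R]
    (j : ℕ) (q : Polynomial R) :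
    Polynomial.C (algebraMap ℚ R (1 / (j.factorial : ℚ))) * Polynomial.derivative^[j] q
      = Polynomial.hasseDeriv j q := by
  have h := congrFun (Polynomial.factorial_smul_hasseDeriv (R := R) (k := j)) q
  rw [← h, LinearMap.smul_apply, nsmul_eq_mul, ← mul_assoc]
  have h1 : (Polynomial.C (algebraMap ℚ R (1 / (j.factorial : ℚ))) *
      ((j.factorial : ℕ) : Polynomial R)) = 1 := by
    rw [← Polynomial.C_eq_natCast, ← map_mul]
    have : (algebraMap ℚ R) (1 / (j.factorial : ℚ)) * ((j.factorial : ℕ) : R) = 1 := by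
      rw [← map_natCast (algebraMap ℚ R) j.factorial, ← map_mul,
        one_div_mul_cancel (by exact_mod_cast j.factorial_ne_zero), map_one]
    rw [this, map_one]
  rw [h1, one_mul]

end CoeffSubstAux

open CoeffSubstAux in
/-- Let `R` be a commutative `ℚ`-algebra, `U(Y) = Σ_{j=0}^{a} u_j Y^j`, and let
`I(Y,Z) = Σ_k I_k(Y)Z^k` be the formal inverse of `Y + Z·U(Y)^b` in `(R[Y])[[Z]]`
(expressed coefficientwise, the `k`-th term of `Σ_k I_k(Y + Z·U(Y)^b)·Z^k` being divisible
by `Z^k`).  Define `v_k(Y)` to be the coefficient of `Z^k` in `U(I(Y,Z))`.  Then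
`v_0 = U` and, for every `m ≥ 1`, `Σ_{j=0}^{m} (U^{bj}/j!)·v_{m−j}^{(j)} = 0`, i.e.
`v_m = −Σ_{j=1}^{m} (U^{bj}/j!)·v_{m−j}^{(j)}`. -/
theorem coeff_U_formal_inverse (R : Type*) [CommRing R] [Algebra ℚ R]
    (a b : ℕ) (ha : 1 ≤ a) (hb : 1 ≤ b) (u : ℕ → R) (U : Polynomial R)
    (hU : U = ∑ j ∈ Finset.range (a + 1), Polynomial.C (u j) * Polynomial.X ^ j)
    (I : ℕ → Polynomial R)
    (hI : (PowerSeries.mk fun m => ∑ k ∈ Finset.range (m + 1),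
        (Polynomial.eval₂ (Polynomial.C.comp Polynomial.C)
          (Polynomial.C Polynomial.X + Polynomial.X * Polynomial.C (U ^ b))
          (I k)).coeff (m - k))
      = PowerSeries.C (R := Polynomial R) Polynomial.X)
    (v : ℕ → Polynomial R)
    (hv : ∀ k, v k = PowerSeries.coeff (R := Polynomial R) k
        (Polynomial.eval₂ ((PowerSeries.C (R := Polynomial R)).comp Polynomial.C)
          (PowerSeries.mk fun n => I n) U)) :
    v 0 = U ∧ ∀ m, 1 ≤ m →
      ∑ j ∈ Finset.range (m + 1),
        Polynomial.C (algebraMap ℚ R (1 / (j.factorial : ℚ))) * U ^ (b * j) *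
          Polynomial.derivative^[j] (v (m - j)) = 0 := by
  classical
  set w : Polynomial (Polynomial R) :=
    Polynomial.C Polynomial.X + Polynomial.X * Polynomial.C (U ^ b) with hw
  set ψ : Polynomial R →+* PowerSeries (Polynomial R) :=
    (Polynomial.coeToPowerSeries.ringHom).comp
      (Polynomial.eval₂RingHom (Polynomial.C.comp Polynomial.C) w) with hψ
  have hψcoeff : ∀ (p : Polynomial R) (n : ℕ),
      PowerSeries.coeff (R := Polynomial R) n (ψ p)
        = (Polynomial.eval₂ (Polynomial.C.comp Polynomial.C) w p).coeff n := by
    intro p n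
    simp [hψ, Polynomial.coeff_coe]
  have hΦJ : Phi ψ (PowerSeries.mk fun n => I n)
      = PowerSeries.C (R := Polynomial R) Polynomial.X := by
    refine PowerSeries.ext fun m => ?_
    rw [coeff_Phi]
    have hIm := congrArg (PowerSeries.coeff (R := Polynomial R) m) hI
    rw [PowerSeries.coeff_mk] at hIm
    rw [← hIm]
    exact Finset.sum_congr rfl fun k _ => by rw [hψcoeff, PowerSeries.coeff_mk]
  set V := Polynomial.eval₂ ((PowerSeries.C (R := Polynomial R)).comp Polynomial.C)
      (PowerSeries.mk fun n => I n) U with hV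
  have hΦV : Phi ψ V = PowerSeries.C (R := Polynomial R) U := by
    rw [hV, Polynomial.hom_eval₂, hΦJ]
    have hcomp : (Phi ψ).comp ((PowerSeries.C (R := Polynomial R)).comp Polynomial.C)
        = (PowerSeries.C (R := Polynomial R)).comp Polynomial.C := by
      apply RingHom.ext; intro r
      simp only [RingHom.comp_apply]
      rw [Phi_C]
      simp [hψ, Polynomial.eval₂_C]
    rw [hcomp]
    have h2 := Polynomial.hom_eval₂ (p := U) (f := Polynomial.C)
      (g := PowerSeries.C (R := Polynomial R)) Polynomial.X
    rw [← h2, Polynomial.eval₂_C_X]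
  have key : ∀ m, (if m = 0 then U else 0)
      = ∑ k ∈ Finset.range (m + 1),
          Polynomial.hasseDeriv (m - k) (v k) * (U ^ b) ^ (m - k) := by
    intro m
    have hc := congrArg (PowerSeries.coeff (R := Polynomial R) m) hΦV
    rw [coeff_Phi, PowerSeries.coeff_C] at hc
    rw [← hc]
    refine (Finset.sum_congr rfl fun k hk => ?_).symm
    rw [hψcoeff, ← hv k, coeff_eval₂_taylor]
  constructor
  · have h0 := key 0
    simp [Polynomial.hasseDeriv_zero] at h0
    exact h0.symm
  · intro m hm
    have hkey := key m
    rw [if_neg (by omega)] at hkey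
    have hrefl := Finset.sum_range_reflect
      (fun k => Polynomial.hasseDeriv (m - k) (v k) * (U ^ b) ^ (m - k)) (m + 1)
    have step1 : ∀ j ∈ Finset.range (m + 1),
        Polynomial.C (algebraMap ℚ R (1 / (j.factorial : ℚ))) * U ^ (b * j) *
          Polynomial.derivative^[j] (v (m - j))
        = Polynomial.hasseDeriv (m - (m - j)) (v (m - j)) * (U ^ b) ^ (m - (m - j)) := by
      intro j hj
      rw [Finset.mem_range] at hj
      rw [Nat.sub_sub_self (by omega), ← C_inv_factorial_mul_iter_deriv, pow_mul]
      ring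
    rw [Finset.sum_congr rfl step1]
    simp only [Nat.add_sub_cancel] at hrefl
    rw [hrefl, ← hkey]
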